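/- In ℝ², let D₁, …, D_m be closed disks with radii r₁, …, r_m forming a non-separable arrangement (no line of ℝ² is disjoint from all the disks while having at least one disk strictly on each side), and let K be the convex hull of their union, with circumradius R_K. Then 2R_K ≤ 2(r₁ + ⋯ + r_m), i.e., the circumradius of K is at most the sum of the diameters of the disks. -/

import Mathlib

open Real MeasureTheory RealInnerProductSpace


/-- An interval family (center, radius) has no "gap": whenever some interval lies strictly
below `s` and some strictly above, some interval covers `s`. -/
def gapfree (L : List (ℝ × ℝ)) : Prop :=
  ∀ s : ℝ, (∃ p ∈ L, p.1 + p.2 < s) → (∃ p ∈ L, s < p.1 - p.2) →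
    ∃ p ∈ L, p.1 - p.2 ≤ s ∧ s ≤ p.1 + p.2

lemma gapfree_perm {L L' : List (ℝ × ℝ)} (h : L.Perm L') (hg : gapfree L) : gapfree L' := by
  intro s h1 h2
  obtain ⟨p, hp, h3⟩ := hg s
    (by obtain ⟨p, hp, hps⟩ := h1; exact ⟨p, h.symm.subset hp, hps⟩)
    (by obtain ⟨p, hp, hps⟩ := h2; exact ⟨p, h.symm.subset hp, hps⟩)
  exact ⟨p, h.subset hp, h3⟩

noncomputable def mrg (a b : ℝ × ℝ) : ℝ × ℝ :=
  ((a.2 * a.1 + b.2 * b.1) / (a.2 + b.2), a.2 + b.2)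

def covW (L : List (ℝ × ℝ)) : ℝ := (L.map Prod.snd).sum
def covM (L : List (ℝ × ℝ)) : ℝ := (L.map fun p => p.2 * p.1).sum

lemma covW_perm {L L' : List (ℝ × ℝ)} (h : L.Perm L') : covW L = covW L' :=
  (h.map Prod.snd).sum_eq
lemma covM_perm {L L' : List (ℝ × ℝ)} (h : L.Perm L') : covM L = covM L' :=
  (h.map _).sum_eq

lemma covW_nonneg {L : List (ℝ × ℝ)} (h : ∀ p ∈ L, 0 < p.2) : 0 ≤ covW L := by
  apply List.sum_nonneg
  intro x hx
  obtain ⟨p, hp, rfl⟩ := List.mem_map.mp hx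
  exact (h p hp).le

lemma mrg_top {a b : ℝ × ℝ} (ha : 0 < a.2) (hb : 0 < b.2) (hov : |a.1 - b.1| ≤ a.2 + b.2) :
    a.1 + a.2 ≤ (mrg a b).1 + (mrg a b).2 ∧ b.1 + b.2 ≤ (mrg a b).1 + (mrg a b).2 := by
  have hs : 0 < a.2 + b.2 := by linarith
  have h1 := (abs_le.mp hov).1
  have h2 := (abs_le.mp hov).2
  constructor
  · rw [mrg, ← sub_le_iff_le_add, le_div_iff₀ hs]
    nlinarith
  · rw [mrg, ← sub_le_iff_le_add, le_div_iff₀ hs]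
    nlinarith

lemma mrg_bot {a b : ℝ × ℝ} (ha : 0 < a.2) (hb : 0 < b.2) (hov : |a.1 - b.1| ≤ a.2 + b.2) :
    (mrg a b).1 - (mrg a b).2 ≤ a.1 - a.2 ∧ (mrg a b).1 - (mrg a b).2 ≤ b.1 - b.2 := by
  have hs : 0 < a.2 + b.2 := by linarith
  have h1 := (abs_le.mp hov).1
  have h2 := (abs_le.mp hov).2
  constructor
  · rw [mrg, sub_le_iff_le_add, div_le_iff₀ hs]
    nlinarith
  · rw [mrg, sub_le_iff_le_add, div_le_iff₀ hs]
    nlinarith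

lemma exists_perm_cons {α : Type*} [DecidableEq α] {a : α} {l : List α} (h : a ∈ l) :
    ∃ t : List α, l.Perm (a :: t) ∧ t.length + 1 = l.length ∧ ∀ x ∈ t, x ∈ l := by
  refine ⟨l.erase a, List.perm_cons_erase h, ?_, fun x hx => List.erase_subset hx⟩
  have := List.length_erase_of_mem h
  have := List.length_pos_iff.mpr (List.ne_nil_of_mem h)
  omega

lemma exists_max_top : ∀ (L : List (ℝ × ℝ)), L ≠ [] →
    ∃ q ∈ L, ∀ p ∈ L, p.1 + p.2 ≤ q.1 + q.2 := by
  intro L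
  induction L with
  | nil => simp
  | cons a t ih =>
    intro _
    rcases eq_or_ne t [] with rfl | ht
    · exact ⟨a, by simp, by simp⟩
    · obtain ⟨q, hq, hmax⟩ := ih ht
      rcases le_total (q.1 + q.2) (a.1 + a.2) with h | h
      · refine ⟨a, List.mem_cons_self, ?_⟩
        intro p hp
        rcases List.mem_cons.mp hp with rfl | hp
        · exact le_refl _
        · exact le_trans (hmax p hp) h
      · refine ⟨q, List.mem_cons_of_mem _ hq, ?_⟩
        intro p hp
        rcases List.mem_cons.mp hp with rfl | hp
        · exact h
        · exact hmax p hp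

lemma oneD : ∀ (n : ℕ) (L : List (ℝ × ℝ)), L.length ≤ n → (∀ p ∈ L, 0 < p.2) →
    gapfree L → ∀ p ∈ L, covW L * (p.1 + p.2) ≤ covM L + covW L ^ 2 := by
  intro n
  induction n with
  | zero =>
    intro L hL _ _ p hp
    rw [List.length_eq_zero_iff.mp (Nat.le_zero.mp hL)] at hp
    simp at hp
  | succ n ih =>
    intro L hL hpos hgf p hp
    -- maximal-top element q
    have hLne : L ≠ [] := by rintro rfl; simp at hp
    obtain ⟨q, hqL, hqmax⟩ := exists_max_top L hLne
    obtain ⟨rest, hperm1, hlen1, hsub1⟩ := exists_perm_cons hqL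
    rcases eq_or_ne rest [] with hre | hre
    · -- singleton case
      have : L.Perm [q] := by rw [hre] at hperm1; exact hperm1
      have hWL : covW L = q.2 := by rw [covW_perm this]; simp [covW]
      have hML : covM L = q.2 * q.1 := by rw [covM_perm this]; simp [covM]
      have hpq : p = q := by
        have := this.subset hp
        simpa using this
      subst hpq
      rw [hWL, hML]
      nlinarith [(hpos p hp)]
    · by_cases hov : ∃ b ∈ rest, |q.1 - b.1| ≤ q.2 + b.2
      · -- merge case
        obtain ⟨b, hbrest, hbov⟩ := hov
        have hbL : b ∈ L := hsub1 b hbrest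
        obtain ⟨rest', hperm2, hlen2, hsub2⟩ := exists_perm_cons hbrest
        have hperm : L.Perm (q :: b :: rest') := hperm1.trans (hperm2.cons q)
        have hq2 : 0 < q.2 := hpos q hqL
        have hb2 : 0 < b.2 := hpos b hbL
        have htop := mrg_top hq2 hb2 hbov
        have hbot := mrg_bot hq2 hb2 hbov
        set M := mrg q b with hM
        have hmemL : ∀ x ∈ L, x = q ∨ x = b ∨ x ∈ rest' := by
          intro x hx
          have := hperm.subset hx
          simpa using this
        -- positivity on newL
        have hpos' : ∀ x ∈ M :: rest', 0 < x.2 := by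
          intro x hx
          rcases List.mem_cons.mp hx with rfl | hx
          · show (0:ℝ) < q.2 + b.2; linarith
          · exact hpos x (hperm.symm.subset (by simp [hx]))
        -- gapfree on newL
        have hgf' : gapfree (M :: rest') := by
          have hg2 : gapfree (q :: b :: rest') := gapfree_perm hperm hgf
          intro s h1 h2
          obtain ⟨p1, hp1, hp1s⟩ := h1
          obtain ⟨p2, hp2, hp2s⟩ := h2
          have hbelow : ∃ p ∈ q :: b :: rest', p.1 + p.2 < s := by
            rcases List.mem_cons.mp hp1 with rfl | hp1
            · exact ⟨q, by simp, lt_of_le_of_lt htop.1 hp1s⟩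
            · exact ⟨p1, by simp [hp1], hp1s⟩
          have habove : ∃ p ∈ q :: b :: rest', s < p.1 - p.2 := by
            rcases List.mem_cons.mp hp2 with rfl | hp2
            · exact ⟨q, by simp, lt_of_lt_of_le hp2s hbot.1⟩
            · exact ⟨p2, by simp [hp2], hp2s⟩
          obtain ⟨pc, hpc, hc1, hc2⟩ := hg2 s hbelow habove
          rcases List.mem_cons.mp hpc with rfl | hpc
          · exact ⟨M, List.mem_cons_self, le_trans hbot.1 hc1, le_trans hc2 htop.1⟩
          rcases List.mem_cons.mp hpc with rfl | hpc
          · exact ⟨M, List.mem_cons_self, le_trans hbot.2 hc1, le_trans hc2 htop.2⟩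
          · exact ⟨pc, List.mem_cons_of_mem _ hpc, hc1, hc2⟩
        -- length
        have hlen : (M :: rest').length ≤ n := by
          simp only [List.length_cons]
          omega
        -- invariants
        have hWeq : covW L = covW (M :: rest') := by
          rw [covW_perm hperm]
          simp only [covW, List.map_cons, List.sum_cons, hM, mrg]
          ring
        have hMeq : covM L = covM (M :: rest') := by
          rw [covM_perm hperm]
          simp only [covM, List.map_cons, List.sum_cons, hM, mrg]
          have : q.2 + b.2 ≠ 0 := by positivity
          field_simp
          ring
        have hIH := ih (M :: rest') hlen hpos' hgf' M (List.mem_cons_self)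
        have hW0 : 0 ≤ covW L := covW_nonneg hpos
        calc covW L * (p.1 + p.2) ≤ covW L * (M.1 + M.2) := by
              apply mul_le_mul_of_nonneg_left _ hW0
              exact le_trans (hqmax p hp) htop.1
          _ = covW (M :: rest') * (M.1 + M.2) := by rw [hWeq]
          _ ≤ covM (M :: rest') + covW (M :: rest') ^ 2 := hIH
          _ = covM L + covW L ^ 2 := by rw [hWeq, hMeq]
      · -- gap case: impossible
        push_neg at hov
        exfalso
        obtain ⟨b0, hb0rest, hb0max⟩ := exists_max_top rest hre
        have hb0L : b0 ∈ L := hsub1 b0 hb0rest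
        -- every element of rest lies strictly below q's interval
        have hbelow : ∀ x ∈ rest, x.1 + x.2 < q.1 - q.2 := by
          intro x hx
          have hxL : x ∈ L := hsub1 x hx
          have h1 : q.2 + x.2 < |q.1 - x.1| := hov x hx
          have hx2 : 0 < x.2 := hpos x hxL
          have hq2 : 0 < q.2 := hpos q hqL
          rcases abs_cases (q.1 - x.1) with ⟨he, _⟩ | ⟨he, _⟩
          · rw [he] at h1; linarith
          · rw [he] at h1
            have := hqmax x hxL
            linarith
        set s := ((b0.1 + b0.2) + (q.1 - q.2)) / 2 with hs
        have hlt1 : b0.1 + b0.2 < s := by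
          have := hbelow b0 hb0rest
          rw [hs]; linarith
        have hlt2 : s < q.1 - q.2 := by
          have := hbelow b0 hb0rest
          rw [hs]; linarith
        obtain ⟨pc, hpc, hc1, hc2⟩ := hgf s ⟨b0, hb0L, hlt1⟩ ⟨q, hqL, hlt2⟩
        rcases List.mem_cons.mp (hperm1.subset hpc) with rfl | hpc'
        · linarith
        · have := hb0max pc hpc'
          linarith

/-- Goodman–Goodman inequality (inequality (8)): if closed disks with centers `c i` and
radii `rad i` form a non-separable arrangement in `ℝ²`, and `K` is the convex hull of their
union, then twice the circumradius of `K` is at most the sum of the diameters of the disks. -/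
theorem circumradius_le_sum_diameters (m : ℕ) (hm : 0 < m)
    (c : Fin m → EuclideanSpace ℝ (Fin 2)) (rad : Fin m → ℝ) (hrad : ∀ i, 0 < rad i)
    (hNS : ¬ ∃ (u : EuclideanSpace ℝ (Fin 2)) (s : ℝ), ‖u‖ = 1 ∧
      (∀ i, ∀ x ∈ Metric.closedBall (c i) (rad i), ⟪x, u⟫ ≠ s) ∧
      (∃ i, ∀ x ∈ Metric.closedBall (c i) (rad i), ⟪x, u⟫ < s) ∧
      (∃ j, ∀ x ∈ Metric.closedBall (c j) (rad j), s < ⟪x, u⟫)) :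
    2 * sInf {R : ℝ | ∃ p,
        convexHull ℝ (⋃ i, Metric.closedBall (c i) (rad i)) ⊆ Metric.closedBall p R} ≤
      2 * ∑ i, rad i := by
  haveI : Nonempty (Fin m) := ⟨⟨0, hm⟩⟩
  set S : ℝ := ∑ i, rad i with hSdef
  have hS : 0 < S := Finset.sum_pos (fun i _ => hrad i) Finset.univ_nonempty
  set O : EuclideanSpace ℝ (Fin 2) := S⁻¹ • ∑ i, rad i • c i with hOdef
  -- Key claim: every disk lies in the ball of radius S around O.
  have key : ∀ k, dist (c k) O + rad k ≤ S := by
    intro k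
    by_cases hco : c k = O
    · rw [hco, dist_self, zero_add]
      exact Finset.single_le_sum (fun i _ => (hrad i).le) (Finset.mem_univ k)
    · have hv : c k - O ≠ 0 := sub_ne_zero.mpr hco
      have hnv : (0:ℝ) < ‖c k - O‖ := norm_pos_iff.mpr hv
      set u : EuclideanSpace ℝ (Fin 2) := ‖c k - O‖⁻¹ • (c k - O) with hu
      have hun : ‖u‖ = 1 := norm_smul_inv_norm hv
      -- the projected interval family
      set L : List (ℝ × ℝ) := List.ofFn (fun i => (⟪c i, u⟫, rad i)) with hL
      have hmemL : ∀ p, p ∈ L ↔ ∃ i, (⟪c i, u⟫, rad i) = p := by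
        intro p; rw [hL, List.mem_ofFn]
      have hpos : ∀ p ∈ L, 0 < p.2 := by
        intro p hp
        obtain ⟨i, rfl⟩ := (hmemL p).mp hp
        exact hrad i
      -- gapfree via non-separability
      have hgf : gapfree L := by
        intro s h1 h2
        by_contra hcov
        push_neg at hcov
        apply hNS
        refine ⟨u, s, hun, ?_, ?_, ?_⟩
        · intro i x hx
          have hi : (⟪c i, u⟫, rad i) ∈ L := (hmemL _).mpr ⟨i, rfl⟩
          have hic := hcov _ hi
          have hb : |⟪x, u⟫ - ⟪c i, u⟫| ≤ rad i := by
            rw [← inner_sub_left]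
            calc |⟪x - c i, u⟫| ≤ ‖x - c i‖ * ‖u‖ := abs_real_inner_le_norm _ _
              _ ≤ rad i := by
                  rw [hun, mul_one, ← dist_eq_norm]
                  exact hx
          have hb1 := (abs_le.mp hb).1
          have hb2 := (abs_le.mp hb).2
          intro hxs
          simp only at hic hb1 hb2
          have h6 : ⟪c i, u⟫ - rad i ≤ s := by linarith
          have h7 := hic h6
          linarith
        · obtain ⟨p, hp, hps⟩ := h1
          obtain ⟨i, rfl⟩ := (hmemL p).mp hp
          refine ⟨i, fun x hx => ?_⟩
          have hb : |⟪x, u⟫ - ⟪c i, u⟫| ≤ rad i := by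
            rw [← inner_sub_left]
            calc |⟪x - c i, u⟫| ≤ ‖x - c i‖ * ‖u‖ := abs_real_inner_le_norm _ _
              _ ≤ rad i := by rw [hun, mul_one, ← dist_eq_norm]; exact hx
          have := (abs_le.mp hb).2
          simp only at hps
          linarith
        · obtain ⟨p, hp, hps⟩ := h2
          obtain ⟨j, rfl⟩ := (hmemL p).mp hp
          refine ⟨j, fun x hx => ?_⟩
          have hb : |⟪x, u⟫ - ⟪c j, u⟫| ≤ rad j := by
            rw [← inner_sub_left]
            calc |⟪x - c j, u⟫| ≤ ‖x - c j‖ * ‖u‖ := abs_real_inner_le_norm _ _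
              _ ≤ rad j := by rw [hun, mul_one, ← dist_eq_norm]; exact hx
          have := (abs_le.mp hb).1
          simp only at hps
          linarith
      -- apply the 1D lemma
      have hWL : covW L = S := by
        simp [covW, hL, List.map_ofFn, List.sum_ofFn, hSdef, Function.comp]
      have hML : covM L = S * ⟪O, u⟫ := by
        have h1 : covM L = ∑ i, rad i * ⟪c i, u⟫ := by
          simp [covM, hL, List.map_ofFn, List.sum_ofFn, Function.comp]
        have h2 : ⟪(∑ i, rad i • c i : EuclideanSpace ℝ (Fin 2)), u⟫
            = ∑ i, rad i * ⟪c i, u⟫ := by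
          rw [sum_inner]
          exact Finset.sum_congr rfl fun i _ => real_inner_smul_left _ _ _
        have h3 : ⟪O, u⟫ = S⁻¹ * ∑ i, rad i * ⟪c i, u⟫ := by
          rw [hOdef, real_inner_smul_left, h2]
        rw [h1, h3]
        field_simp
      have hk := oneD L.length L le_rfl hpos hgf (⟪c k, u⟫, rad k) ((hmemL _).mpr ⟨k, rfl⟩)
      rw [hWL, hML] at hk
      have hineq : ⟪c k, u⟫ + rad k ≤ ⟪O, u⟫ + S := by
        have h4 : S * (⟪c k, u⟫ + rad k) ≤ S * (⟪O, u⟫ + S) := by nlinarith [hk]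
        exact (mul_le_mul_iff_right₀ hS).mp h4
      have h5 : ⟪c k - O, u⟫ = ‖c k - O‖ := by
        rw [hu, real_inner_smul_right, real_inner_self_eq_norm_sq]
        field_simp
      rw [inner_sub_left] at h5
      rw [dist_eq_norm, ← h5]
      linarith
  -- conclude
  set K := convexHull ℝ (⋃ i, Metric.closedBall (c i) (rad i)) with hK
  have hKball : K ⊆ Metric.closedBall O S := by
    apply convexHull_min _ (convex_closedBall _ _)
    apply Set.iUnion_subset
    intro i x hx
    rw [Metric.mem_closedBall]
    calc dist x O ≤ dist x (c i) + dist (c i) O := dist_triangle _ _ _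
      _ ≤ rad i + dist (c i) O := by
          exact add_le_add_left (Metric.mem_closedBall.mp hx) _
      _ ≤ S := by have := key i; linarith
  have hmem : S ∈ {R : ℝ | ∃ p, K ⊆ Metric.closedBall p R} := ⟨O, hKball⟩
  have hbdd : BddBelow {R : ℝ | ∃ p, K ⊆ Metric.closedBall p R} := by
    refine ⟨0, fun R hR => ?_⟩
    obtain ⟨p, hp⟩ := hR
    have hc0 : c ⟨0, hm⟩ ∈ K := by
      apply subset_convexHull
      exact Set.mem_iUnion.mpr ⟨⟨0, hm⟩, Metric.mem_closedBall_self (hrad _).le⟩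
    have := hp hc0
    rw [Metric.mem_closedBall] at this
    exact le_trans dist_nonneg this
  have := csInf_le hbdd hmem
  linarith
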